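/- Every connected graph G with average degree d = 2e(G)/n(G) contains two vertex-disjoint nonempty sets A, B with V(G) = A ⊔ B, both G[A] and G[B] connected, and with at least d²/64 edges between A and B whenever d ≥ 8; in particular CMC(G) = Ω(d²). -/

import Mathlib

set_option linter.unusedSectionVars false
set_option linter.unusedVariables false
set_option maxHeartbeats 1000000

/-- The set of edges of `G` crossing between `A` and its complement. -/
def cutEdges {V : Type*} (G : SimpleGraph V) (A : Set V) : Set (Sym2 V) :=
  {e | e ∈ G.edgeSet ∧ ∃ a ∈ A, ∃ b ∈ Aᶜ, e = s(a, b)}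

open Finset List

section Aux

variable {V : Type*} [Fintype V] [DecidableEq V] {G : SimpleGraph V}

/-- A "normal spanning tree" of `G` rooted at `r`, encoded by ancestor chains. -/
def IsDFSChain (G : SimpleGraph V) (r : V) (A : V → List V) : Prop :=
  A r = [r] ∧ (∀ v, v ≠ r → ∃ p, G.Adj p v ∧ A v = v :: A p) ∧
    ∀ ⦃u v⦄, G.Adj u v → A u <:+ A v ∨ A v <:+ A u

structure DFSInv (G : SimpleGraph V) (r : V) (S : Finset V) (A : V → List V) (c : V) : Prop where
  root_mem : r ∈ S
  root_chain : A r = [r]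
  parent : ∀ v ∈ S, v ≠ r → ∃ p ∈ S, G.Adj p v ∧ A v = v :: A p
  normal : ∀ u ∈ S, ∀ v ∈ S, G.Adj u v → A u <:+ A v ∨ A v <:+ A u
  cmem : c ∈ S
  stack : ∀ u ∈ S, ∀ w, w ∉ S → G.Adj u w → u ∈ A c
  chain_in : ∀ v ∈ S, ∀ u ∈ A v, u ∈ S

theorem DFSInv.chain_suffix {r : V} {S : Finset V} {A : V → List V} {c : V}
    (inv : DFSInv G r S A c) :
    ∀ v ∈ S, ∀ u ∈ A v, A u <:+ A v := by
  have key : ∀ n : ℕ, ∀ v ∈ S, (A v).length ≤ n → ∀ u ∈ A v, A u <:+ A v := by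
    intro n
    induction n with
    | zero =>
      intro v hv hlen u hu
      simp [List.length_eq_zero_iff.mp (Nat.le_zero.mp hlen)] at hu
    | succ n ih =>
      intro v hv hlen u hu
      by_cases hvr : v = r
      · subst hvr
        rw [inv.root_chain] at hu ⊢
        simp at hu
        subst hu
        rw [inv.root_chain]
      · obtain ⟨p, hp, -, hAv⟩ := inv.parent v hv hvr
        rw [hAv] at hu ⊢
        rcases List.mem_cons.mp hu with h | h
        · subst h; rw [← hAv]
        · have hplen : (A p).length ≤ n := by
            rw [hAv] at hlen; simp at hlen; omega
          exact (ih p hp hplen u h).trans (List.suffix_cons _ _)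
  intro v hv; exact key (A v).length v hv le_rfl

theorem exists_dfsChain (hG : G.Connected) (r : V) : ∃ A, IsDFSChain G r A := by
  classical
  have main : ∀ k : ℕ, ∀ S : Finset V, ∀ A : V → List V, ∀ c : V,
      DFSInv G r S A c →
      (Fintype.card V - S.card) * (Fintype.card V + 2) + (A c).length ≤ k →
      ∃ A', IsDFSChain G r A' := by
    intro k
    induction k using Nat.strong_induction_on with
    | _ k ih =>
      intro S A c inv hk
      by_cases hnb : ∃ w, w ∉ S ∧ G.Adj c w
      · -- visit step
        obtain ⟨w, hwS, hcw⟩ := hnb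
        set A' := Function.update A w (w :: A c) with hA'
        have hAne : ∀ v, v ≠ w → A' v = A v := fun v hv => Function.update_of_ne hv _ _
        have hAw : A' w = w :: A c := Function.update_self _ _ _
        have hwr : w ≠ r := fun h => hwS (h ▸ inv.root_mem)
        have hcS := inv.cmem
        have hcw' : c ≠ w := fun h => hwS (h ▸ hcS)
        have inv' : DFSInv G r (insert w S) A' w := by
          constructor
          · exact Finset.mem_insert_of_mem inv.root_mem
          · rw [hAne r (Ne.symm hwr)]; exact inv.root_chain
          · intro v hv hvr
            rcases Finset.mem_insert.mp hv with h | h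
            · subst h
              exact ⟨c, Finset.mem_insert_of_mem hcS, hcw, by rw [hAw, hAne c hcw']⟩
            · have hvw : v ≠ w := fun hh => hwS (hh ▸ h)
              obtain ⟨p, hp, hadj, hch⟩ := inv.parent v h hvr
              have hpw : p ≠ w := fun hh => hwS (hh ▸ hp)
              exact ⟨p, Finset.mem_insert_of_mem hp, hadj, by rw [hAne v hvw, hAne p hpw, hch]⟩
          · intro u hu v hv hadj
            rcases Finset.mem_insert.mp hu with hu' | hu' <;>
              rcases Finset.mem_insert.mp hv with hv' | hv'
            · subst hu'; subst hv'; exact absurd hadj (G.irrefl)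
            · subst hu'
              have : v ∈ A c := inv.stack v hv' u hwS hadj.symm
              have hsv : A v <:+ A c := inv.chain_suffix c hcS v this
              right
              rw [hAw, hAne v (fun hh => hwS (hh ▸ hv'))]
              exact hsv.trans (List.suffix_cons _ _)
            · subst hv'
              have : u ∈ A c := inv.stack u hu' v hwS hadj
              have hsu : A u <:+ A c := inv.chain_suffix c hcS u this
              left
              rw [hAw, hAne u (fun hh => hwS (hh ▸ hu'))]
              exact hsu.trans (List.suffix_cons _ _)
            · rw [hAne u (fun hh => hwS (hh ▸ hu')), hAne v (fun hh => hwS (hh ▸ hv'))]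
              exact inv.normal u hu' v hv' hadj
          · exact Finset.mem_insert_self _ _
          · intro u hu x hx hadj
            rw [hAw]
            rcases Finset.mem_insert.mp hu with h | h
            · subst h; exact List.mem_cons_self
            · have : u ∈ A c := inv.stack u h x (fun hh => hx (Finset.mem_insert_of_mem hh)) hadj
              exact List.mem_cons_of_mem _ this
          · intro v hv u hu
            rcases Finset.mem_insert.mp hv with h | h
            · subst h
              rw [hAw] at hu
              rcases List.mem_cons.mp hu with h' | h'
              · subst h'; exact Finset.mem_insert_self _ _
              · exact Finset.mem_insert_of_mem (inv.chain_in c hcS u h')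
            · rw [hAne v (fun hh => hwS (hh ▸ h))] at hu
              exact Finset.mem_insert_of_mem (inv.chain_in v h u hu)
        have hcard : S.card < Fintype.card V := by
          exact Finset.card_lt_card (Finset.ssubset_univ_iff.mpr (fun h => hwS (h ▸ Finset.mem_univ w)))
        have hmeas : (Fintype.card V - (insert w S).card) * (Fintype.card V + 2) + (A' w).length < k := by
          rw [Finset.card_insert_of_notMem hwS, hAw]
          have h1 : Fintype.card V - (S.card + 1) = (Fintype.card V - S.card) - 1 := by omega
          rw [h1]
          have h2 : ((Fintype.card V - S.card) - 1) * (Fintype.card V + 2)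
              = (Fintype.card V - S.card) * (Fintype.card V + 2) - (Fintype.card V + 2) := by
            rw [Nat.sub_mul, one_mul]
          rw [h2]
          have h3 : Fintype.card V + 2 ≤ (Fintype.card V - S.card) * (Fintype.card V + 2) := by
            calc Fintype.card V + 2 = 1 * (Fintype.card V + 2) := (one_mul _).symm
            _ ≤ _ := Nat.mul_le_mul_right _ (by omega)
          have := hAne c hcw'
          simp only [List.length_cons]
          omega
        exact ih _ hmeas (insert w S) A' w inv' le_rfl
      · push_neg at hnb
        by_cases hcr : c = r
        · -- finished
          subst hcr
          have step : ∀ v w : V, G.Walk v w → v ∈ S → w ∈ S := by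
            intro v w p
            induction p with
            | nil => exact id
            | cons hadj q ihq =>
              intro hv
              rename_i a b w'
              by_cases hb : b ∈ S
              · exact ihq hb
              · have := inv.stack a hv b hb hadj
                rw [inv.root_chain] at this
                simp at this
                subst this
                exact absurd hadj (hnb b hb)
          have hall : ∀ v, v ∈ S := fun v => step c v (hG.preconnected c v).some inv.cmem
          refine ⟨A, inv.root_chain, ?_, ?_⟩
          · intro v hvr
            obtain ⟨p, _, hadj, hch⟩ := inv.parent v (hall v) hvr
            exact ⟨p, hadj, hch⟩
          · intro u v hadj
            exact inv.normal u (hall u) v (hall v) hadj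
        · -- backtrack
          obtain ⟨p, hp, hadj, hch⟩ := inv.parent c inv.cmem hcr
          have inv' : DFSInv G r S A p := by
            constructor
            · exact inv.root_mem
            · exact inv.root_chain
            · exact inv.parent
            · exact inv.normal
            · exact hp
            · intro u hu w hw hadjw
              have := inv.stack u hu w hw hadjw
              rw [hch] at this
              rcases List.mem_cons.mp this with h | h
              · subst h; exact absurd hadjw (hnb w hw)
              · exact h
            · exact inv.chain_in
          have hmeas : (Fintype.card V - S.card) * (Fintype.card V + 2) + (A p).length < k := by
            have : (A p).length < (A c).length := by rw [hch]; simp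
            omega
          exact ih _ hmeas S A p inv' le_rfl
  have hr : r ∈ (Finset.univ : Finset V) := Finset.mem_univ r
  refine main ((Fintype.card V - 1) * (Fintype.card V + 2) + 1) {r} (fun _ => [r]) r ?_ ?_
  · constructor
    · simp
    · rfl
    · intro v hv hvr; simp at hv; exact absurd hv hvr
    · intro u hu v hv hadj; simp at hu hv; subst hu; subst hv; exact absurd hadj (G.irrefl)
    · simp
    · intro u hu w hw hadjw; simp at hu; simp [hu]
    · intro v hv u hu; simp at hv hu; simp [hv, hu]
  · simp

namespace IsDFSChain

variable {r : V} {A : V → List V} (h : IsDFSChain G r A)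
include h

theorem head? (v : V) : (A v).head? = some v := by
  by_cases hv : v = r
  · subst hv; rw [h.1]; rfl
  · obtain ⟨p, -, hch⟩ := h.2.1 v hv; rw [hch]; rfl

theorem ne_nil (v : V) : A v ≠ [] := by
  intro hh
  have := h.head? v
  rw [hh] at this
  simp at this

theorem injA {u v : V} (huv : A u = A v) : u = v := by
  have h1 := h.head? u
  have h2 := h.head? v
  rw [huv, h2] at h1
  exact (Option.some_inj.mp h1).symm

/-- every nonempty suffix of a chain is itself a chain. -/
theorem suffix_chain : ∀ v l u, l <:+ A v → l.head? = some u → A u = l := by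
  have key : ∀ n : ℕ, ∀ v, (A v).length ≤ n → ∀ l u, l <:+ A v → l.head? = some u → A u = l := by
    intro n
    induction n with
    | zero =>
      intro v hlen l u hsuf hhead
      have := h.ne_nil v
      rw [List.length_eq_zero_iff.mp (Nat.le_zero.mp hlen)] at this
      simp at this
    | succ n ih =>
      intro v hlen l u hsuf hhead
      by_cases hlv : l = A v
      · subst hlv
        have := h.head? v
        rw [hhead] at this
        rw [Option.some_inj.mp this]
      · by_cases hvr : v = r
        · subst hvr
          rw [h.1] at hsuf hlv
          rcases List.suffix_cons_iff.mp hsuf with h1 | h1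
          · exact absurd h1 hlv
          · simp at h1; subst h1; simp at hhead
        · obtain ⟨p, -, hch⟩ := h.2.1 v hvr
          rw [hch] at hsuf hlv hlen
          rcases List.suffix_cons_iff.mp hsuf with h1 | h1
          · exact absurd h1 hlv
          · exact ih p (by simp at hlen; omega) l u h1 hhead
  intro v; exact key (A v).length v le_rfl

theorem root_suffix : ∀ v, [r] <:+ A v := by
  have key : ∀ n : ℕ, ∀ v, (A v).length ≤ n → [r] <:+ A v := by
    intro n
    induction n with
    | zero =>
      intro v hlen
      have := h.ne_nil v
      rw [List.length_eq_zero_iff.mp (Nat.le_zero.mp hlen)] at this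
      simp at this
    | succ n ih =>
      intro v hlen
      by_cases hvr : v = r
      · subst hvr; rw [h.1]
      · obtain ⟨p, -, hch⟩ := h.2.1 v hvr
        rw [hch] at hlen ⊢
        simp at hlen
        exact (ih p (by omega)).trans (List.suffix_cons _ _)
  intro v; exact key (A v).length v le_rfl

end IsDFSChain

/-- suffixes of a common list are totally ordered. -/
theorem suffix_total {α : Type*} {l1 l2 L : List α} (h1 : l1 <:+ L) (h2 : l2 <:+ L)
    (hle : l1.length ≤ l2.length) : l1 <:+ l2 := by
  obtain ⟨t1, rfl⟩ := h1
  obtain ⟨t2, ht2⟩ := h2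
  have hlen : t2.length ≤ t1.length := by
    have := congrArg List.length ht2
    simp at this
    omega
  have : l2 = t1.drop t2.length ++ l1 := by
    have h3 : (t2 ++ l2).drop t2.length = l2 := by simp
    rw [ht2] at h3
    rw [← h3, List.drop_append_of_le_length hlen]
  exact ⟨_, this.symm⟩

def subtree (A : V → List V) (v : V) : Set V := {w | A v <:+ A w}

namespace IsDFSChain

variable {r : V} {A : V → List V} (h : IsDFSChain G r A)
include h

theorem subtree_connected (v : V) : (G.induce (subtree A v)).Connected := by
  have hv : v ∈ subtree A v := List.suffix_rfl
  have key : ∀ n : ℕ, ∀ w, (hw : w ∈ subtree A v) → (A w).length ≤ n →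
      (G.induce (subtree A v)).Reachable ⟨w, hw⟩ ⟨v, hv⟩ := by
    intro n
    induction n with
    | zero =>
      intro w hw hlen
      have := h.ne_nil w
      rw [List.length_eq_zero_iff.mp (Nat.le_zero.mp hlen)] at this
      simp at this
    | succ n ih =>
      intro w hw hlen
      by_cases hwv : w = v
      · subst hwv; rfl
      · have hwr : w ≠ r := by
          intro hh
          subst hh
          have : A v <:+ [w] := by rw [← h.1]; exact hw
          rcases List.suffix_cons_iff.mp this with h1 | h1
          · exact hwv (h.injA (by rw [h1, h.1])).symm
          · simp at h1; exact absurd h1 (h.ne_nil v)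
        obtain ⟨p, hadj, hch⟩ := h.2.1 w hwr
        have hp : p ∈ subtree A v := by
          have : A v <:+ w :: A p := by rw [← hch]; exact hw
          rcases List.suffix_cons_iff.mp this with h1 | h1
          · exact absurd (h.injA (by rw [h1, hch])).symm hwv
          · exact h1
        have hplen : (A p).length ≤ n := by
          rw [hch] at hlen; simp at hlen; omega
        have hadj' : (G.induce (subtree A v)).Adj ⟨w, hw⟩ ⟨p, hp⟩ := by
          simp [hadj.symm]
        exact hadj'.reachable.trans (ih p hp hplen)
  rw [SimpleGraph.connected_iff]
  refine ⟨?_, ⟨⟨v, hv⟩⟩⟩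
  intro ⟨a, ha⟩ ⟨b, hb⟩
  exact (key (A a).length a ha le_rfl).trans (key (A b).length b hb le_rfl).symm

theorem root_not_mem_subtree {v : V} (hvr : v ≠ r) : r ∉ subtree A v := by
  intro hh
  have : A v <:+ [r] := by rw [← h.1]; exact hh
  rcases List.suffix_cons_iff.mp this with h1 | h1
  · exact hvr (h.injA (by rw [h1, h.1]))
  · simp at h1; exact absurd h1 (h.ne_nil v)

theorem compl_subtree_connected {v : V} (hvr : v ≠ r) :
    (G.induce (subtree A v)ᶜ).Connected := by
  have hr : r ∈ (subtree A v)ᶜ := h.root_not_mem_subtree hvr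
  have key : ∀ n : ℕ, ∀ w, (hw : w ∈ (subtree A v)ᶜ) → (A w).length ≤ n →
      (G.induce (subtree A v)ᶜ).Reachable ⟨w, hw⟩ ⟨r, hr⟩ := by
    intro n
    induction n with
    | zero =>
      intro w hw hlen
      have := h.ne_nil w
      rw [List.length_eq_zero_iff.mp (Nat.le_zero.mp hlen)] at this
      simp at this
    | succ n ih =>
      intro w hw hlen
      by_cases hwr : w = r
      · subst hwr; rfl
      · obtain ⟨p, hadj, hch⟩ := h.2.1 w hwr
        have hp : p ∈ (subtree A v)ᶜ := by
          intro hh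
          exact hw ((hh : A v <:+ A p).trans (by rw [hch]; exact List.suffix_cons _ _))
        have hplen : (A p).length ≤ n := by
          rw [hch] at hlen; simp at hlen; omega
        have hadj' : (G.induce (subtree A v)ᶜ).Adj ⟨w, hw⟩ ⟨p, hp⟩ := by
          simp [hadj.symm]
        exact hadj'.reachable.trans (ih p hp hplen)
  rw [SimpleGraph.connected_iff]
  refine ⟨?_, ⟨⟨r, hr⟩⟩⟩
  intro ⟨a, ha⟩ ⟨b, hb⟩
  exact (key (A a).length a ha le_rfl).trans (key (A b).length b hb le_rfl).symm

end IsDFSChain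


section Counting
variable [DecidableRel G.Adj]

def cross (A : V → List V) (v : V) (e : Sym2 V) : Prop :=
  ∃ a, A v <:+ A a ∧ ∃ b, ¬ A v <:+ A b ∧ e = s(a, b)

instance (A : V → List V) (v : V) (e : Sym2 V) : Decidable (cross A v e) := by
  unfold cross; infer_instance

/-- difference of depths of the two endpoints. -/
def eDiff (A : V → List V) : Sym2 V → ℕ :=
  Sym2.lift ⟨fun u w => ((A u).length - (A w).length) + ((A w).length - (A u).length),
    fun u w => by dsimp; omega⟩

theorem eDiff_mk (A : V → List V) (x y : V) :
    eDiff A s(x, y) = ((A x).length - (A y).length) + ((A y).length - (A x).length) := rfl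

namespace IsDFSChain

variable {r : V} {A : V → List V} (h : IsDFSChain G r A)
include h

theorem length_ne {x y : V} (hadj : G.Adj x y) : (A x).length ≠ (A y).length := by
  intro hlen
  rcases h.2.2 hadj with hs | hs
  · exact hadj.ne (h.injA (hs.eq_of_length hlen))
  · exact hadj.ne (h.injA (hs.eq_of_length hlen.symm)).symm

theorem cross_iff {x y : V} (hadj : G.Adj x y) (hxy : A x <:+ A y) (v : V) :
    cross A v s(x, y) ↔ (A v <:+ A y ∧ ¬ A v <:+ A x) := by
  constructor
  · rintro ⟨a, ha, b, hb, he⟩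
    rcases Sym2.eq_iff.mp he with ⟨rfl, rfl⟩ | ⟨rfl, rfl⟩
    · exact absurd (ha.trans hxy) hb
    · exact ⟨ha, hb⟩
  · rintro ⟨h1, h2⟩
    exact ⟨y, h1, x, h2, Sym2.eq_swap⟩

theorem card_cross {x y : V} (hadj : G.Adj x y) (hxy : A x <:+ A y) :
    (univ.filter (fun v => cross A v s(x, y))).card = (A y).length - (A x).length := by
  have hcard : (Finset.Ioc (A x).length (A y).length).card = (A y).length - (A x).length :=
    Nat.card_Ioc _ _
  rw [← hcard]
  apply Finset.card_bij' (i := fun v _ => (A v).length)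
    (j := fun ℓ hℓ => ((A y).drop ((A y).length - ℓ)).head (by
      apply List.ne_nil_of_length_pos
      rw [List.length_drop]
      rw [Finset.mem_Ioc] at hℓ
      omega))
  · -- hj : maps into filter
    intro ℓ hℓ
    rw [Finset.mem_Ioc] at hℓ
    rw [Finset.mem_filter]
    refine ⟨Finset.mem_univ _, ?_⟩
    set l := (A y).drop ((A y).length - ℓ) with hl
    have hne : l ≠ [] := by
      apply List.ne_nil_of_length_pos
      rw [hl, List.length_drop]
      omega
    have hsuf : l <:+ A y := List.drop_suffix _ _
    have hAhead : A (l.head hne) = l := h.suffix_chain y l _ hsuf (List.head?_eq_head hne)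
    have hlen : l.length = ℓ := by rw [hl, List.length_drop]; omega
    rw [h.cross_iff hadj hxy]
    constructor
    · rw [hAhead]; exact hsuf
    · rw [hAhead]
      intro hcon
      have := hcon.length_le
      omega
  · -- left inverse
    intro v hv
    rw [Finset.mem_filter] at hv
    obtain ⟨-, hc⟩ := hv
    rw [h.cross_iff hadj hxy] at hc
    obtain ⟨h1, -⟩ := hc
    set l := (A y).drop ((A y).length - (A v).length) with hl
    have hlenv : (A v).length ≤ (A y).length := h1.length_le
    have hlen : l.length = (A v).length := by rw [hl, List.length_drop]; omega
    have hne : l ≠ [] := by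
      apply List.ne_nil_of_length_pos
      rw [hlen]
      exact List.length_pos_iff.mpr (h.ne_nil v)
    have hsuf : l <:+ A y := List.drop_suffix _ _
    have hAv : A v = l := by
      have hst : A v <:+ l := suffix_total h1 hsuf (le_of_eq hlen.symm)
      exact hst.eq_of_length hlen.symm
    have hAhead : A (l.head hne) = l := h.suffix_chain y l _ hsuf (List.head?_eq_head hne)
    exact h.injA (hAhead.trans hAv.symm)
  · -- right inverse
    intro ℓ hℓ
    rw [Finset.mem_Ioc] at hℓ
    set l := (A y).drop ((A y).length - ℓ) with hl
    have hne : l ≠ [] := by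
      apply List.ne_nil_of_length_pos
      rw [hl, List.length_drop]
      omega
    have hAhead : A (l.head hne) = l :=
      h.suffix_chain y l _ (List.drop_suffix _ _) (List.head?_eq_head hne)
    rw [hAhead, hl, List.length_drop]
    omega

  · -- hi : maps into Ioc
    intro v hv
    rw [Finset.mem_filter] at hv
    obtain ⟨-, hc⟩ := hv
    rw [h.cross_iff hadj hxy] at hc
    obtain ⟨h1, h2⟩ := hc
    rw [Finset.mem_Ioc]
    refine ⟨?_, h1.length_le⟩
    by_contra hh
    push_neg at hh
    exact h2 (suffix_total h1 (hxy.trans (List.suffix_refl _)) hh)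
theorem card_cross_eDiff {e : Sym2 V} (he : e ∈ G.edgeFinset) :
    (univ.filter (fun v => cross A v e)).card = eDiff A e := by
  induction e using Sym2.ind with
  | _ x y =>
    have hadj : G.Adj x y := by rwa [SimpleGraph.mem_edgeFinset, SimpleGraph.mem_edgeSet] at he
    rcases h.2.2 hadj with hs | hs
    · rw [h.card_cross hadj hs, eDiff_mk]
      have := hs.length_le
      omega
    · rw [Sym2.eq_swap, h.card_cross hadj.symm hs, eDiff_mk]
      have := hs.length_le
      omega

theorem sum_card_cross :
    ∑ v : V, (G.edgeFinset.filter (fun e => cross A v e)).card = ∑ e ∈ G.edgeFinset, eDiff A e := by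
  simp_rw [Finset.card_filter]
  rw [Finset.sum_comm]
  apply Finset.sum_congr rfl
  intro e he
  rw [← h.card_cross_eDiff he, Finset.card_filter]

end IsDFSChain

namespace IsDFSChain
variable {r : V} {A : V → List V} (h : IsDFSChain G r A)
include h

theorem eDiff_pos {e : Sym2 V} (he : e ∈ G.edgeFinset) : 1 ≤ eDiff A e := by
  revert he
  induction e using Sym2.ind with
  | _ x y =>
    intro he
    have hadj : G.Adj x y := by rwa [SimpleGraph.mem_edgeFinset, SimpleGraph.mem_edgeSet] at he
    have := h.length_ne hadj
    rw [eDiff_mk]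
    omega

theorem card_short_le (t : ℕ) :
    (G.edgeFinset.filter (fun e => eDiff A e ≤ t)).card ≤ Fintype.card V * t := by
  classical
  set F : V → Finset (Sym2 V) := fun w => G.edgeFinset.filter
    (fun e => w ∈ e ∧ (∀ u ∈ e, (A u).length ≤ (A w).length) ∧ eDiff A e ≤ t) with hF
  have hsub : G.edgeFinset.filter (fun e => eDiff A e ≤ t) ⊆ univ.biUnion F := by
    intro e he
    rw [Finset.mem_filter] at he
    obtain ⟨heE, het⟩ := he
    rw [Finset.mem_biUnion]
    revert heE het
    induction e using Sym2.ind with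
    | _ x y =>
      intro heE het
      by_cases hle : (A y).length ≤ (A x).length
      · exact ⟨x, Finset.mem_univ _, Finset.mem_filter.mpr ⟨heE,
          Sym2.mem_mk_left _ _, fun u hu => by
            rcases Sym2.mem_iff.mp hu with rfl | rfl
            · exact le_rfl
            · exact hle, het⟩⟩
      · push_neg at hle
        exact ⟨y, Finset.mem_univ _, Finset.mem_filter.mpr ⟨heE,
          Sym2.mem_mk_right _ _, fun u hu => by
            rcases Sym2.mem_iff.mp hu with rfl | rfl
            · exact le_of_lt hle
            · exact le_rfl, het⟩⟩
  calc (G.edgeFinset.filter (fun e => eDiff A e ≤ t)).card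
      ≤ (univ.biUnion F).card := Finset.card_le_card hsub
    _ ≤ ∑ w : V, (F w).card := Finset.card_biUnion_le
    _ ≤ ∑ _w : V, t := Finset.sum_le_sum (fun w _ => ?_)
    _ = Fintype.card V * t := by simp [mul_comm]
  -- (F w).card ≤ t
  have hcard : (Finset.Icc 1 t).card = t := by rw [Nat.card_Icc]; omega
  rw [← hcard]
  apply Finset.card_le_card_of_injOn (f := eDiff A) (t := Finset.Icc 1 t)
  · intro e heF
    simp only [hF, Finset.mem_coe, Finset.mem_filter] at heF
    rw [Finset.mem_coe, Finset.mem_Icc]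
    exact ⟨h.eDiff_pos heF.1, heF.2.2.2⟩
  · intro e1 he1 e2 he2 heq
    simp only [hF, Finset.mem_coe, Finset.mem_filter] at he1 he2
    obtain ⟨he1E, hw1, hmax1, -⟩ := he1
    obtain ⟨he2E, hw2, hmax2, -⟩ := he2
    set u1 := Sym2.Mem.other hw1 with hu1
    set u2 := Sym2.Mem.other hw2 with hu2
    have hs1 : s(w, u1) = e1 := Sym2.other_spec hw1
    have hs2 : s(w, u2) = e2 := Sym2.other_spec hw2
    have hadj1 : G.Adj w u1 := by
      rw [← hs1] at he1E
      rwa [SimpleGraph.mem_edgeFinset, SimpleGraph.mem_edgeSet] at he1E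
    have hadj2 : G.Adj w u2 := by
      rw [← hs2] at he2E
      rwa [SimpleGraph.mem_edgeFinset, SimpleGraph.mem_edgeSet] at he2E
    have hle1 : (A u1).length ≤ (A w).length := hmax1 u1 (Sym2.other_mem hw1)
    have hle2 : (A u2).length ≤ (A w).length := hmax2 u2 (Sym2.other_mem hw2)
    have hlen : (A u1).length = (A u2).length := by
      rw [← hs1, ← hs2] at heq
      rw [eDiff_mk, eDiff_mk] at heq
      omega
    have hsuf1 : A u1 <:+ A w := by
      rcases h.2.2 hadj1 with hs | hs
      · exact absurd (h.injA (hs.eq_of_length (le_antisymm hs.length_le hle1 ▸ rfl))) hadj1.ne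
      · exact hs
    have hsuf2 : A u2 <:+ A w := by
      rcases h.2.2 hadj2 with hs | hs
      · exact absurd (h.injA (hs.eq_of_length (le_antisymm hs.length_le hle2 ▸ rfl))) hadj2.ne
      · exact hs
    have : u1 = u2 :=
      h.injA ((suffix_total hsuf1 hsuf2 (le_of_eq hlen)).eq_of_length hlen)
    rw [← hs1, ← hs2, this]

theorem sum_eDiff_ge (t : ℕ) :
    (t + 1) * (G.edgeFinset.card - Fintype.card V * t) ≤ ∑ e ∈ G.edgeFinset, eDiff A e := by
  classical
  set S := G.edgeFinset.filter (fun e => eDiff A e ≤ t) with hS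
  set T := G.edgeFinset.filter (fun e => ¬ eDiff A e ≤ t) with hT
  have hTcard : G.edgeFinset.card - Fintype.card V * t ≤ T.card := by
    have h1 : S.card + T.card = G.edgeFinset.card := by
      rw [hS, hT, Finset.card_filter_add_card_filter_not]
    have h2 := h.card_short_le t
    rw [← hS] at h2
    omega
  calc (t + 1) * (G.edgeFinset.card - Fintype.card V * t)
      ≤ (t + 1) * T.card := Nat.mul_le_mul_left _ hTcard
    _ = ∑ _e ∈ T, (t + 1) := by rw [Finset.sum_const, smul_eq_mul, mul_comm]
    _ ≤ ∑ e ∈ T, eDiff A e := Finset.sum_le_sum (fun e heT => by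
        rw [hT, Finset.mem_filter] at heT
        omega)
    _ ≤ ∑ e ∈ G.edgeFinset, eDiff A e :=
        Finset.sum_le_sum_of_subset (Finset.filter_subset _ _)

theorem cross_root_false {e : Sym2 V} (hc : cross A r e) : False := by
  obtain ⟨a, -, b, hb, -⟩ := hc
  rw [h.1] at hb
  exact hb (h.root_suffix b)

end IsDFSChain

end Counting

end Aux

/-- every finite connected graph `G` with average degree
`d = 2e(G)/n(G) ≥ 8` contains a partition `V(G) = A ⊔ Aᶜ` into nonempty parts, both
inducing connected subgraphs, with at least `d²/64` crossing edges; in particular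
`CMC(G) = Ω(d²)`. -/
theorem connected_cut_ge_avg_deg_sq {V : Type*} [Fintype V] (G : SimpleGraph V)
    (hG : G.Connected)
    (d : ℝ) (hd : d = 2 * (G.edgeSet.ncard : ℝ) / (Fintype.card V : ℝ))
    (hd8 : 8 ≤ d) :
    ∃ A : Set V, A.Nonempty ∧ Aᶜ.Nonempty ∧
      (G.induce A).Connected ∧ (G.induce Aᶜ).Connected ∧
      d ^ 2 / 64 ≤ ((cutEdges G A).ncard : ℝ) := by
  classical
  have hne : Nonempty V := hG.nonempty
  set n := Fintype.card V with hn
  have hn0 : 0 < n := Fintype.card_pos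
  set r : V := Classical.arbitrary V with hr
  obtain ⟨A, hA⟩ := exists_dfsChain hG r
  set m := G.edgeFinset.card with hm
  have hmncard : (G.edgeSet.ncard : ℝ) = (m : ℝ) := by
    have h' : G.edgeSet.ncard = m := by rw [hm, ← SimpleGraph.coe_edgeFinset, Set.ncard_coe_finset]
    exact_mod_cast h'
  rw [hmncard] at hd
  have hnR : (0 : ℝ) < (n : ℝ) := by exact_mod_cast hn0
  have hmR : (m : ℝ) = d * n / 2 := by
    rw [hd]; field_simp
  -- the threshold
  set t : ℕ := ⌈d / 8⌉₊ with ht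
  have ht1 : d / 8 ≤ (t : ℝ) := Nat.le_ceil _
  have ht2 : (t : ℝ) < d / 8 + 1 := Nat.ceil_lt_add_one (by linarith)
  -- key real inequality
  have hkey : (n : ℝ) * t + d / 4 * n ≤ (m : ℝ) := by
    rw [hmR]
    nlinarith [hnR.le, hd8, ht2]
  have hntm : n * t ≤ m := by
    have : ((n * t : ℕ) : ℝ) ≤ (m : ℝ) := by push_cast; nlinarith [hnR.le, hd8]
    exact_mod_cast this
  -- pigeonhole
  obtain ⟨v, -, hmax⟩ := Finset.exists_max_image Finset.univ
    (fun v => (G.edgeFinset.filter (fun e => cross A v e)).card) ⟨r, Finset.mem_univ r⟩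
  set c := (G.edgeFinset.filter (fun e => cross A v e)).card with hc
  have hsum : (t + 1) * (m - n * t) ≤ n * c := by
    calc (t + 1) * (m - n * t) ≤ ∑ e ∈ G.edgeFinset, eDiff A e := hA.sum_eDiff_ge t
      _ = ∑ w : V, (G.edgeFinset.filter (fun e => cross A w e)).card := hA.sum_card_cross.symm
      _ ≤ Finset.univ.card • c := Finset.sum_le_card_nsmul _ _ _ (fun w _ => hmax w (Finset.mem_univ w))
      _ = n * c := by rw [smul_eq_mul, Finset.card_univ]
  -- real bound on c
  have hcR : d ^ 2 / 32 ≤ (c : ℝ) := by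
    have hcast : ((t + 1) * (m - n * t) : ℕ) = ((t : ℝ) + 1) * ((m : ℝ) - n * t) := by
      push_cast [Nat.cast_sub hntm]
      ring
    have hsumR : ((t : ℝ) + 1) * ((m : ℝ) - n * t) ≤ (n : ℝ) * c := by
      rw [← hcast]
      exact_mod_cast hsum
    have h1 : d / 8 ≤ (t : ℝ) + 1 := by linarith
    have h2 : d / 4 * n ≤ (m : ℝ) - n * t := by linarith
    have h3 : d ^ 2 / 32 * n ≤ (n : ℝ) * c := by
      nlinarith [hd8, hnR]
    have := (mul_le_mul_iff_of_pos_right hnR).mp (by linarith [h3] : d ^ 2 / 32 * n ≤ (c : ℝ) * n)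
    linarith
  -- v is not the root
  have hvr : v ≠ r := by
    intro hveq
    have : c = 0 := by
      rw [hc, Finset.card_eq_zero]
      apply Finset.filter_false_of_mem
      intro e he hcr
      rw [hveq] at hcr
      exact hA.cross_root_false hcr
    rw [this] at hcR
    norm_num at hcR
    nlinarith [hd8]
  -- assemble
  refine ⟨subtree A v, ⟨v, List.suffix_rfl⟩, ⟨r, hA.root_not_mem_subtree hvr⟩,
    hA.subtree_connected v, hA.compl_subtree_connected hvr, ?_⟩
  have hset : cutEdges G (subtree A v) = ↑(G.edgeFinset.filter (fun e => cross A v e)) := by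
    ext e
    simp only [cutEdges, cross, subtree, Set.mem_setOf_eq, Set.mem_compl_iff,
      Finset.coe_filter, Finset.mem_coe, Finset.mem_filter, SimpleGraph.mem_edgeFinset]
    show _ ↔ e ∈ G.edgeFinset.filter (fun e => cross A v e)
    rw [Finset.mem_filter, SimpleGraph.mem_edgeFinset, cross]
  rw [hset, Set.ncard_coe_finset, ← hc]
  have : d ^ 2 / 64 ≤ d ^ 2 / 32 := by nlinarith [hd8]
  linarith
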